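/- Let c > 1, u₀ = (3c − √(c²+8))/2, u₊ = 3c − u₀, and α = u₀ − c + c/(u₀−c)². Define D(u) = u² − (2α + u₊)u + 2αc. Then D(u₀) = 0, D'(u₀) < 0, and D is strictly decreasing on [0, u₀]; consequently D(u) > 0 for all 0 ≤ u < u₀. -/

import Mathlib

theorem D_properties (c : ℝ) (hc : 1 < c) :
    let u₀ : ℝ := (3 * c - Real.sqrt (c ^ 2 + 8)) / 2
    let uPlus : ℝ := 3 * c - u₀
    let α : ℝ := u₀ - c + c / (u₀ - c) ^ 2
    let D : ℝ → ℝ := fun u => u ^ 2 - (2 * α + uPlus) * u + 2 * α * c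
    D u₀ = 0 ∧ deriv D u₀ < 0 ∧ StrictAntiOn D (Set.Icc 0 u₀) ∧
    ∀ u : ℝ, 0 ≤ u → u < u₀ → 0 < D u := by
  intro u₀ uPlus α D
  have hs0 : (0:ℝ) ≤ Real.sqrt (c ^ 2 + 8) := Real.sqrt_nonneg _
  have hs2 : (Real.sqrt (c ^ 2 + 8)) ^ 2 = c ^ 2 + 8 := Real.sq_sqrt (by positivity)
  set s := Real.sqrt (c ^ 2 + 8) with hsdef
  have hu : u₀ = (3 * c - s) / 2 := rfl
  have hup : uPlus = 3 * c - u₀ := rfl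
  have ha : α = u₀ - c + c / (u₀ - c) ^ 2 := rfl
  have hDf : ∀ u, D u = u ^ 2 - (2 * α + uPlus) * u + 2 * α * c := fun u => rfl
  have hcs : c < s := by nlinarith
  have hs3 : s < 3 * c := by nlinarith
  have htneg : u₀ - c < 0 := by rw [hu]; linarith
  have ht : u₀ - c ≠ 0 := ne_of_lt htneg
  have hu0pos : 0 < u₀ := by rw [hu]; linarith
  have hcpos : (0:ℝ) < c := by linarith
  have hfrac : 0 < c / (u₀ - c) ^ 2 := div_pos hcpos (by positivity)
  -- key inequality: 2 u₀ < 2α + u₊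
  have hkey : 2 * u₀ < 2 * α + uPlus := by
    rw [ha, hup]; linarith
  -- D u₀ = 0
  have hq : u₀ ^ 2 = 3 * c * u₀ - 2 * (c ^ 2 - 1) := by
    rw [hu]; linear_combination hs2 / 4
  have hα' : α * (u₀ - c) ^ 2 = (u₀ - c) ^ 3 + c := by
    rw [ha]; field_simp
  have hD0 : D u₀ = 0 := by
    have h2 : D u₀ * (u₀ - c) ^ 2 = 0 := by
      rw [hDf, hup]
      linear_combination (2 * (c - u₀)) * hα' + (c * u₀ - c ^ 2) * hq
    have := mul_eq_zero.mp h2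
    rcases this with h | h
    · exact h
    · exact absurd h (pow_ne_zero 2 ht)
  -- derivative
  have hD' : ∀ x : ℝ, HasDerivAt D (2 * x - (2 * α + uPlus)) x := by
    intro x
    have h := ((hasDerivAt_pow 2 x).sub ((hasDerivAt_id x).const_mul (2 * α + uPlus))).add_const
      (2 * α * c)
    refine h.congr_deriv ?_
    ring
  have hderiv : deriv D u₀ = 2 * u₀ - (2 * α + uPlus) := (hD' u₀).deriv
  have hderivlt : deriv D u₀ < 0 := by rw [hderiv]; linarith
  -- strict anti on [0, u₀]
  have hanti : StrictAntiOn D (Set.Icc 0 u₀) := by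
    intro x hx y hy hxy
    rw [hDf, hDf]
    have hx2 : x ≤ u₀ := hx.2
    have hy2 : y ≤ u₀ := hy.2
    nlinarith [mul_pos (sub_pos.mpr hxy) (show (0:ℝ) < (2 * α + uPlus) - (x + y) by linarith)]
  refine ⟨hD0, hderivlt, hanti, ?_⟩
  intro u h0 hlt
  have := hanti ⟨h0, le_of_lt hlt⟩ ⟨le_of_lt hu0pos, le_refl _⟩ hlt
  rw [hD0] at this
  exact this
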